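/- Let G be a soluble group in which every element of the derived subgroup G' has finite order. Then G' is locally finite. -/

import Mathlib

open Subgroup

private lemma derivedSeries_subgroup_le (G : Type*) [Group G] (m n : ℕ) :
    (derivedSeries (↥(derivedSeries G m)) n).map (derivedSeries G m).subtype
      ≤ derivedSeries G (m + n) := by
  induction n with
  | zero =>
    simp [derivedSeries_zero, ← MonoidHom.range_eq_map, Subgroup.range_subtype]
  | succ n ih =>
    rw [show m + (n + 1) = (m + n) + 1 from rfl, derivedSeries_succ, derivedSeries_succ,
      Subgroup.map_commutator]
    exact commutator_mono ih ih

/-- Extension step: if `G` is torsion and `commutator G` is locally finite,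
then `G` is locally finite. -/
private lemma locallyFinite_step (G : Type*) [Group G]
    (tors : ∀ x : G, IsOfFinOrder x)
    (hcomm : ∀ K : Subgroup ↥(commutator G), K.FG → Finite K) :
    ∀ H : Subgroup G, H.FG → Finite H := by
  intro H hHfg
  haveI : Group.FG ↥H := (Group.fg_iff_subgroup_fg H).mpr hHfg
  -- map to abelianization
  let φ : ↥H →* Abelianization G := (Abelianization.of).comp H.subtype
  -- range of φ is a f.g. torsion abelian group, hence finite
  haveI : Group.FG ↥φ.range := Group.fg_of_surjective φ.rangeRestrict_surjective
  haveI hfin : Finite ↥φ.range := by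
    apply CommGroup.finite_of_fg_torsion
    intro x
    obtain ⟨y, hy⟩ := x.2
    have h1 : IsOfFinOrder (Abelianization.of (y : G)) :=
      (Abelianization.of).isOfFinOrder (tors (y : G))
    apply Submonoid.isOfFinOrder_coe.mp
    show IsOfFinOrder (x : Abelianization G)
    rw [← hy]
    exact h1
  -- φ.ker has finite index in H, hence is f.g.
  haveI : φ.ker.FiniteIndex := by
    constructor
    rw [Subgroup.index_ker]
    exact Nat.card_ne_zero.mpr ⟨Nonempty.intro ⟨1, one_mem _⟩, hfin⟩
  haveI : Group.FG ↥φ.ker := Subgroup.fg_of_index_ne_zero φ.ker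
  -- φ.ker embeds into commutator G
  have hker_mem : ∀ k : ↥H, k ∈ φ.ker → (k : G) ∈ commutator G := by
    intro k hk
    have h2 : Abelianization.of (k : G) = 1 := hk
    exact (QuotientGroup.eq_one_iff _).mp h2
  let ψ : ↥φ.ker →* ↥(commutator G) :=
    { toFun := fun k => ⟨((k : ↥H) : G), hker_mem k k.2⟩
      map_one' := rfl
      map_mul' := fun _ _ => rfl }
  have hψinj : Function.Injective ψ := by
    intro a b hab
    have h3 := congrArg Subtype.val hab
    exact Subtype.ext (Subtype.ext h3)
  haveI : Finite ↥ψ.range := by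
    apply hcomm
    rw [← Group.fg_iff_subgroup_fg]
    exact Group.fg_of_surjective ψ.rangeRestrict_surjective
  haveI : Finite ↥φ.ker :=
    Finite.of_injective (fun k => (⟨ψ k, ⟨k, rfl⟩⟩ : ↥ψ.range))
      (fun a b hab => hψinj (congrArg Subtype.val hab))
  -- H is an extension of a finite group by a finite group
  haveI : Finite (↥H ⧸ φ.ker) :=
    Finite.of_equiv _ (QuotientGroup.quotientKerEquivRange φ).symm.toEquiv
  exact Finite.of_equiv _ (Subgroup.groupEquivQuotientProdSubgroup (s := φ.ker)).symm

/-- A torsion solvable group is locally finite. -/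
private lemma locallyFinite_of_torsion_solvable :
    ∀ (n : ℕ) (G : Type*) [Group G], derivedSeries G n = ⊥ →
      (∀ x : G, IsOfFinOrder x) → ∀ H : Subgroup G, H.FG → Finite H := by
  intro n
  induction n with
  | zero =>
    intro G _ hbot _ H _
    haveI : Subsingleton G := by
      rw [derivedSeries_zero] at hbot
      constructor
      intro a b
      have ha : a ∈ (⊥ : Subgroup G) := hbot ▸ Subgroup.mem_top a
      have hb : b ∈ (⊥ : Subgroup G) := hbot ▸ Subgroup.mem_top b
      rw [Subgroup.mem_bot] at ha hb
      rw [ha, hb]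
    exact Finite.of_injective (fun h : ↥H => (h : G)) Subtype.val_injective
  | succ n ih =>
    intro G _ hbot tors H hfg
    apply locallyFinite_step G tors _ H hfg
    have hK : derivedSeries (↥(commutator G)) n = ⊥ := by
      have h := derivedSeries_subgroup_le G 1 n
      rw [Nat.add_comm, hbot, le_bot_iff, Subgroup.map_eq_bot_iff,
        Subgroup.ker_subtype, le_bot_iff] at h
      exact h
    intro K hKfg
    exact ih (↥(commutator G)) hK
      (fun x => Submonoid.isOfFinOrder_coe.mp (tors (x : G))) K hKfg

theorem commutator_locallyFinite_of_solvable (G : Type*) [Group G]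
    (hsol : IsSolvable G) (hord : ∀ x ∈ commutator G, IsOfFinOrder x) :
    ∀ H : Subgroup ↥(commutator G), H.FG → Finite ↥H := by
  haveI : IsSolvable ↥(commutator G) :=
    haveI : Group.IsSolvable G := hsol
    solvable_of_solvable_injective (Subgroup.subtype_injective (commutator G))
  obtain ⟨m, hm⟩ := this.solvable
  exact locallyFinite_of_torsion_solvable m (↥(commutator G)) hm
    (fun x => Submonoid.isOfFinOrder_coe.mp (hord (x : G) x.2))
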